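/- Integrated UCB deviation bound: Let (X_k)_{k≥1} be i.i.d. random variables with X_k ∈ [0,1] and mean μ, and let X̄_s = (1/s)Σ_{k=1}^{s} X_k. Let T ≥ 2 be a real number, m ≥ 1 an integer, and ζ > 0. Then ∫_ζ^∞ Σ_{s=1}^{m} P( X̄_s + √(log T / s) − μ > y ) dy ≤ 3·log T/ζ + 4/(T·ζ). -/

import Mathlib

open MeasureTheory ProbabilityTheory

section UCBAux
open Real Set Filter

lemma hoeffding_kernel {p : ℝ} (hp0 : 0 ≤ p) (hp1 : p ≤ 1) {l : ℝ} (hl : 0 ≤ l) :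
    1 - p + p * Real.exp l ≤ Real.exp (l * p + l ^ 2 / 8) := by
  have hD : ∀ x : ℝ, 0 < 1 - p + p * Real.exp x := by
    intro x
    rcases eq_or_lt_of_le hp1 with h | h
    · subst h; have := Real.exp_pos x; nlinarith
    · have := Real.exp_pos x; nlinarith
  set f : ℝ → ℝ := fun x => x * p + x ^ 2 / 8 - Real.log (1 - p + p * Real.exp x) with hf
  set f' : ℝ → ℝ := fun x => p + x / 4 - p * Real.exp x / (1 - p + p * Real.exp x) with hf'
  have hder1 : ∀ x, HasDerivAt f (f' x) x := by
    intro x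
    have h1 : HasDerivAt (fun x => 1 - p + p * Real.exp x) (p * Real.exp x) x :=
      ((Real.hasDerivAt_exp x).const_mul p).const_add (1 - p)
    have h2 : HasDerivAt (fun x => Real.log (1 - p + p * Real.exp x))
        (p * Real.exp x / (1 - p + p * Real.exp x)) x := h1.log (hD x).ne'
    have h3 : HasDerivAt (fun x : ℝ => x * p + x ^ 2 / 8) (p + x / 4) x := by
      have := ((hasDerivAt_pow 2 x).div_const 8).const_add 0
      have h4 := (hasDerivAt_id x).mul_const p
      have := h4.add ((hasDerivAt_pow 2 x).div_const 8)
      refine this.congr_deriv ?_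
      norm_num
      ring
    exact (h3.sub h2)
  have hder2 : ∀ x, HasDerivAt f'
      (1 / 4 - (p * Real.exp x * (1 - p + p * Real.exp x) - p * Real.exp x * (p * Real.exp x)) /
        (1 - p + p * Real.exp x) ^ 2) x := by
    intro x
    have h1 : HasDerivAt (fun x => p * Real.exp x) (p * Real.exp x) x :=
      (Real.hasDerivAt_exp x).const_mul p
    have hDd : HasDerivAt (fun x => 1 - p + p * Real.exp x) (p * Real.exp x) x :=
      ((Real.hasDerivAt_exp x).const_mul p).const_add (1 - p)
    have h2 := h1.div hDd (hD x).ne'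
    have h3 : HasDerivAt (fun x : ℝ => p + x / 4) (1 / 4) x := by
      simpa using ((hasDerivAt_id x).div_const 4).const_add p
    exact h3.sub h2
  have hd2nonneg : ∀ x : ℝ,
      0 ≤ 1 / 4 - (p * Real.exp x * (1 - p + p * Real.exp x) - p * Real.exp x * (p * Real.exp x)) /
        (1 - p + p * Real.exp x) ^ 2 := by
    intro x
    rw [sub_nonneg, div_le_iff₀ (pow_pos (hD x) 2)]
    nlinarith [sq_nonneg (1 - p - p * Real.exp x), Real.exp_pos x]
  have hf'mono : Monotone f' :=
    monotone_of_deriv_nonneg (fun x => (hder2 x).differentiableAt)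
      (fun x => by rw [(hder2 x).deriv]; exact hd2nonneg x)
  have hf'0 : f' 0 = 0 := by simp [hf']
  have hf'nonneg : ∀ x ∈ interior (Set.Ici (0:ℝ)), 0 ≤ deriv f x := by
    intro x hx
    rw [(hder1 x).deriv, ← hf'0]
    exact hf'mono (le_of_lt (by simpa [interior_Ici] using hx))
  have hmono : MonotoneOn f (Set.Ici 0) :=
    monotoneOn_of_deriv_nonneg (convex_Ici 0)
      (fun x _ => (hder1 x).differentiableAt.continuousAt.continuousWithinAt)
      (fun x _ => (hder1 x).differentiableAt.differentiableWithinAt) hf'nonneg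
  have h0 : f 0 = 0 := by simp [hf]
  have : 0 ≤ f l := by
    rw [← h0]
    exact hmono (Set.self_mem_Ici) hl hl
  have hlog : Real.log (1 - p + p * Real.exp l) ≤ l * p + l ^ 2 / 8 := by
    simp only [hf] at this; linarith
  calc 1 - p + p * Real.exp l = Real.exp (Real.log (1 - p + p * Real.exp l)) :=
        (Real.exp_log (hD l)).symm
    _ ≤ Real.exp (l * p + l ^ 2 / 8) := Real.exp_le_exp.2 hlog

lemma mgf_le_of_Icc {Ω : Type*} [MeasurableSpace Ω] (μ : Measure Ω) [IsProbabilityMeasure μ] (Y : Ω → ℝ) (μ₀ : ℝ) (hmeas : Measurable Y)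
    (hbound : ∀ ω, Y ω ∈ Set.Icc (0 : ℝ) 1) (hmean : ∫ ω, Y ω ∂μ = μ₀)
    {l : ℝ} (hl : 0 ≤ l) : mgf Y μ l ≤ Real.exp (l * μ₀ + l ^ 2 / 8) := by
  have hYint : Integrable Y μ := by
    refine (integrable_const (1:ℝ)).mono' hmeas.aestronglyMeasurable (ae_of_all _ fun ω => ?_)
    have h := hbound ω
    rw [Real.norm_eq_abs, abs_le]
    constructor <;> [linarith [h.1]; exact h.2]
  have hμ0 : 0 ≤ μ₀ := hmean ▸ integral_nonneg fun ω => (hbound ω).1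
  have hμ1 : μ₀ ≤ 1 := by
    rw [← hmean]
    calc ∫ ω, Y ω ∂μ ≤ ∫ _, (1:ℝ) ∂μ := integral_mono hYint (integrable_const 1)
          fun ω => (hbound ω).2
      _ = 1 := by simp
  have hpt : ∀ ω, Real.exp (l * Y ω) ≤ 1 - Y ω + Y ω * Real.exp l := by
    intro ω
    have h := hbound ω
    have hc := convexOn_exp.2 (Set.mem_univ (0:ℝ)) (Set.mem_univ l)
      (by linarith [h.2] : (0:ℝ) ≤ 1 - Y ω) h.1 (by ring)
    simp only [smul_eq_mul, mul_zero, Real.exp_zero, mul_one] at hc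
    calc Real.exp (l * Y ω) = Real.exp ((1 - Y ω) * 0 + Y ω * l) := by ring_nf
      _ ≤ (1 - Y ω) * 1 + Y ω * Real.exp l := by simpa using hc
      _ = 1 - Y ω + Y ω * Real.exp l := by ring
  have hint1 : Integrable (fun ω => Real.exp (l * Y ω)) μ := by
    refine (integrable_const (Real.exp l)).mono'
      ((hmeas.const_mul l).exp).aestronglyMeasurable (ae_of_all _ fun ω => ?_)
    rw [Real.norm_eq_abs, abs_of_pos (Real.exp_pos _)]
    exact Real.exp_le_exp.2 (by nlinarith [(hbound ω).1, (hbound ω).2])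
  have hint2 : Integrable (fun ω => 1 - Y ω + Y ω * Real.exp l) μ :=
    ((integrable_const (1:ℝ)).sub hYint).add (hYint.mul_const _)
  calc mgf Y μ l = ∫ ω, Real.exp (l * Y ω) ∂μ := rfl
    _ ≤ ∫ ω, (1 - Y ω + Y ω * Real.exp l) ∂μ := integral_mono hint1 hint2 hpt
    _ = 1 - μ₀ + μ₀ * Real.exp l := by
        have h1 : Integrable (fun ω => 1 - Y ω) μ := (integrable_const 1).sub hYint
        have h2 : Integrable (fun ω => Y ω * Real.exp l) μ := hYint.mul_const _
        rw [integral_add h1 h2, integral_sub (integrable_const 1) hYint,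
          integral_mul_const, hmean]
        simp
    _ ≤ Real.exp (l * μ₀ + l ^ 2 / 8) := hoeffding_kernel hμ0 hμ1 hl

lemma chernoff_sum {Ω : Type*} [MeasurableSpace Ω] (μ : Measure Ω) [IsProbabilityMeasure μ] (X : ℕ → Ω → ℝ) (μ₀ : ℝ)
    (hmeas : ∀ k, Measurable (X k))
    (hindep : iIndepFun X μ)
    (hbound : ∀ k ω, X k ω ∈ Set.Icc (0 : ℝ) 1)
    (hmean : ∀ k, ∫ ω, X k ω ∂μ = μ₀)
    (s : ℕ) {t : ℝ} (ht : 0 < t) :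
    (μ {ω | (s : ℝ) * (μ₀ + t) ≤ ∑ k ∈ Finset.range s, X k ω}).toReal
      ≤ Real.exp (-2 * s * t ^ 2) := by
  have hl : (0:ℝ) ≤ 4 * t := by linarith
  have hint : ∀ k ∈ Finset.range s, Integrable (fun ω => Real.exp (4 * t * X k ω)) μ := by
    intro k _
    refine (integrable_const (Real.exp (4 * t))).mono'
      (((hmeas k).const_mul _).exp).aestronglyMeasurable (ae_of_all _ fun ω => ?_)
    rw [Real.norm_eq_abs, abs_of_pos (Real.exp_pos _)]
    exact Real.exp_le_exp.2 (by nlinarith [(hbound k ω).1, (hbound k ω).2])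
  have hSint : Integrable (fun ω => Real.exp (4 * t * (∑ k ∈ Finset.range s, X k) ω)) μ :=
    hindep.integrable_exp_mul_sum hmeas hint
  have hset : {ω | (s : ℝ) * (μ₀ + t) ≤ ∑ k ∈ Finset.range s, X k ω}
      = {ω | (s : ℝ) * (μ₀ + t) ≤ (∑ k ∈ Finset.range s, X k) ω} := by
    simp [Finset.sum_apply]
  have hch := measure_ge_le_exp_mul_mgf (μ := μ) (X := ∑ k ∈ Finset.range s, X k)
    ((s : ℝ) * (μ₀ + t)) hl hSint
  rw [hset]
  refine hch.trans ?_
  have hmgf : mgf (∑ k ∈ Finset.range s, X k) μ (4 * t)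
      ≤ Real.exp (4 * t * μ₀ + (4 * t) ^ 2 / 8) ^ s := by
    rw [hindep.mgf_sum hmeas]
    calc ∏ k ∈ Finset.range s, mgf (X k) μ (4 * t)
        ≤ ∏ _k ∈ Finset.range s, Real.exp (4 * t * μ₀ + (4 * t) ^ 2 / 8) :=
          Finset.prod_le_prod (fun k _ => mgf_nonneg)
            (fun k _ => mgf_le_of_Icc μ (X k) μ₀ (hmeas k) (hbound k) (hmean k) hl)
      _ = Real.exp (4 * t * μ₀ + (4 * t) ^ 2 / 8) ^ s := by
          rw [Finset.prod_const, Finset.card_range]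
  calc Real.exp (-(4 * t) * ((s:ℝ) * (μ₀ + t))) * mgf (∑ k ∈ Finset.range s, X k) μ (4 * t)
      ≤ Real.exp (-(4 * t) * ((s:ℝ) * (μ₀ + t)))
          * Real.exp (4 * t * μ₀ + (4 * t) ^ 2 / 8) ^ s := by
        exact mul_le_mul_of_nonneg_left hmgf (le_of_lt (Real.exp_pos _))
    _ = Real.exp (-2 * s * t ^ 2) := by
        rw [← Real.exp_nat_mul, ← Real.exp_add]
        congr 1
        ring

lemma sqrt_tendsto_atTop : Filter.Tendsto Real.sqrt Filter.atTop Filter.atTop := by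
  apply Filter.tendsto_atTop_atTop.2
  intro b
  refine ⟨max (b ^ 2) 0, fun x hx => ?_⟩
  calc b ≤ |b| := le_abs_self b
    _ = Real.sqrt (b ^ 2) := (Real.sqrt_sq_eq_abs b).symm
    _ ≤ Real.sqrt x := Real.sqrt_le_sqrt (le_trans (le_max_left _ _) hx)

lemma tail_hasDeriv {y : ℝ} (hy : 0 < y) {x : ℝ} (hx : 0 < x) :
    HasDerivAt (fun x => -((2 * y * Real.sqrt x + 1) * Real.exp (-(2 * y * Real.sqrt x))
      / (2 * y ^ 2))) (Real.exp (-(2 * y * Real.sqrt x))) x := by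
  have hs : Real.sqrt x ≠ 0 := (Real.sqrt_pos.2 hx).ne'
  have hu : HasDerivAt Real.sqrt (1 / (2 * Real.sqrt x)) x := Real.hasDerivAt_sqrt hx.ne'
  have h1 : HasDerivAt (fun x => 2 * y * Real.sqrt x) (2 * y * (1 / (2 * Real.sqrt x))) x :=
    hu.const_mul (2 * y)
  have h2 : HasDerivAt (fun x => Real.exp (-(2 * y * Real.sqrt x)))
      (Real.exp (-(2 * y * Real.sqrt x)) * (-(2 * y * (1 / (2 * Real.sqrt x))))) x :=
    h1.neg.exp
  have h4 := (((h1.add_const 1).mul h2).div_const (2 * y ^ 2)).neg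
  refine h4.congr_deriv ?_
  have hss : Real.sqrt x * Real.sqrt x = x := Real.mul_self_sqrt hx.le
  field_simp
  ring

lemma tail_tendsto {y : ℝ} (hy : 0 < y) :
    Filter.Tendsto (fun x => -((2 * y * Real.sqrt x + 1) * Real.exp (-(2 * y * Real.sqrt x))
      / (2 * y ^ 2))) Filter.atTop (nhds 0) := by
  have h0 : Filter.Tendsto (fun x : ℝ => 2 * y * Real.sqrt x) Filter.atTop Filter.atTop :=
    (Filter.tendsto_const_mul_atTop_of_pos (by positivity)).2 sqrt_tendsto_atTop
  have h1 : Filter.Tendsto (fun t : ℝ => (t + 1) * Real.exp (-t)) Filter.atTop (nhds 0) := by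
    have ha := Real.tendsto_pow_mul_exp_neg_atTop_nhds_zero 1
    have hb := Real.tendsto_exp_neg_atTop_nhds_zero
    have := ha.add hb
    simp only [pow_one, add_zero] at this
    convert this using 2 with t
    ring
  have h2 := (h1.comp h0).div_const (2 * y ^ 2)
  simp only [Function.comp] at h2
  have h3 := h2.neg
  simp only [zero_div, neg_zero] at h3
  convert h3 using 2 with x
  try ring

lemma tail_integral {y a : ℝ} (hy : 0 < y) (ha : 0 < a) :
    (∫ x in Set.Ioi a, Real.exp (-(2 * y * Real.sqrt x)))
      = (2 * y * Real.sqrt a + 1) * Real.exp (-(2 * y * Real.sqrt a)) / (2 * y ^ 2) := by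
  have h := integral_Ioi_of_hasDerivAt_of_nonneg'
    (g := fun x => -((2 * y * Real.sqrt x + 1) * Real.exp (-(2 * y * Real.sqrt x)) / (2 * y ^ 2)))
    (g' := fun x => Real.exp (-(2 * y * Real.sqrt x)))
    (fun x hx => tail_hasDeriv hy (lt_of_lt_of_le ha hx))
    (fun x _ => (Real.exp_pos _).le) (tail_tendsto hy)
  rw [h]; ring

lemma tail_integrable {y a : ℝ} (hy : 0 < y) (ha : 0 < a) :
    IntegrableOn (fun x => Real.exp (-(2 * y * Real.sqrt x))) (Set.Ioi a) :=
  integrableOn_Ioi_deriv_of_nonneg'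
    (fun x hx => tail_hasDeriv hy (lt_of_lt_of_le ha hx))
    (fun x _ => (Real.exp_pos _).le) (tail_tendsto hy)

lemma sum_g_le {L y : ℝ} (hL : 0 < L) (hy : 0 < y) (m : ℕ) :
    ∑ s ∈ Finset.Icc 1 m,
        Real.exp (-(2 * max (Real.sqrt s * y - Real.sqrt L) 0 ^ 2))
      ≤ (L + Real.exp (1 / 2) * (Real.sqrt L + 1 / 2)) / y ^ 2 := by
  set g : ℝ → ℝ := fun x => Real.exp (-(2 * max (Real.sqrt x * y - Real.sqrt L) 0 ^ 2))
    with hg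
  have hganti : Antitone g := by
    intro x x' hxx'
    have h1 : Real.sqrt x ≤ Real.sqrt x' := Real.sqrt_le_sqrt hxx'
    have h3 : (0:ℝ) ≤ max (Real.sqrt x * y - Real.sqrt L) 0 := le_max_right _ _
    have h2 : max (Real.sqrt x * y - Real.sqrt L) 0 ≤ max (Real.sqrt x' * y - Real.sqrt L) 0 := by
      apply max_le_max _ le_rfl
      nlinarith
    apply Real.exp_le_exp.2
    nlinarith
  have hgcont : Continuous g := by
    apply Real.continuous_exp.comp
    apply Continuous.neg
    apply Continuous.mul continuous_const
    apply Continuous.pow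
    exact ((Real.continuous_sqrt.mul continuous_const).sub continuous_const).max continuous_const
  have hg1 : ∀ x, g x ≤ 1 := fun x => Real.exp_le_one_iff.2 (neg_nonpos.2 (by positivity)) 
  have hσ : 0 < L / y ^ 2 := by positivity
  set σ : ℝ := L / y ^ 2 with hσdef
  set c : ℝ := min σ (m : ℝ) with hcdef
  have hc0 : 0 ≤ c := le_min hσ.le (Nat.cast_nonneg m)
  have hcm : c ≤ (m : ℝ) := min_le_right _ _
  have hii : ∀ a b : ℝ, IntervalIntegrable g volume a b := fun a b =>
    hgcont.intervalIntegrable a b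
  set ψ : ℝ → ℝ := fun x => Real.exp (1 / 2 + 2 * Real.sqrt L) * Real.exp (-(2 * y * Real.sqrt x))
    with hψ
  have hψcont : Continuous ψ := by
    apply continuous_const.mul
    apply Real.continuous_exp.comp
    exact (continuous_const.mul Real.continuous_sqrt).neg
  have hgψ : ∀ x, g x ≤ ψ x := by
    intro x
    simp only [hg, hψ]
    rw [← Real.exp_add]
    apply Real.exp_le_exp.2
    rcases le_or_gt (Real.sqrt x * y - Real.sqrt L) 0 with h | h
    · rw [max_eq_right h]; nlinarith
    · rw [max_eq_left h.le]; nlinarith [sq_nonneg (Real.sqrt x * y - Real.sqrt L - 1 / 2)]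
  have hψint : IntegrableOn ψ (Set.Ioi σ) :=
    (tail_integrable hy hσ).const_mul (Real.exp (1 / 2 + 2 * Real.sqrt L))
  have hsum : ∑ s ∈ Finset.Icc 1 m, g s ≤ ∫ x in (0:ℝ)..(0 + (m:ℕ)), g x := by
    have h := AntitoneOn.sum_le_integral (x₀ := (0:ℝ)) (a := m) (f := g)
      (hganti.antitoneOn _)
    refine le_trans (le_of_eq ?_) h
    rw [← Finset.Ico_add_one_right_eq_Icc, Finset.sum_Ico_eq_sum_range]
    simp only [Nat.add_sub_cancel]
    apply Finset.sum_congr rfl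
    intro i _
    congr 1
    push_cast
    ring
  have hsplit : ∫ x in (0:ℝ)..((m:ℕ):ℝ), g x = (∫ x in (0:ℝ)..c, g x) + ∫ x in c..((m:ℕ):ℝ), g x :=
    (intervalIntegral.integral_add_adjacent_intervals (hii 0 c) (hii c m)).symm
  have hb1 : ∫ x in (0:ℝ)..c, g x ≤ σ := by
    calc ∫ x in (0:ℝ)..c, g x ≤ ∫ _x in (0:ℝ)..c, (1:ℝ) :=
        intervalIntegral.integral_mono_on hc0 (hii 0 c) intervalIntegrable_const
          (fun x _ => hg1 x)
      _ = c := by simp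
      _ ≤ σ := min_le_left _ _
  have hb2 : ∫ x in c..((m:ℕ):ℝ), g x ≤ ∫ x in Set.Ioi σ, ψ x := by
    rcases le_or_gt σ (m:ℝ) with h | h
    · have hcσ : c = σ := min_eq_left h
      calc ∫ x in c..((m:ℕ):ℝ), g x ≤ ∫ x in c..((m:ℕ):ℝ), ψ x :=
          intervalIntegral.integral_mono_on hcm (hii c m) (hψcont.intervalIntegrable c m)
            (fun x _ => hgψ x)
        _ = ∫ x in Set.Ioc σ ((m:ℕ):ℝ), ψ x := by
            rw [hcσ, intervalIntegral.integral_of_le h]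
        _ ≤ ∫ x in Set.Ioi σ, ψ x := by
            apply setIntegral_mono_set hψint
            · exact Filter.Eventually.of_forall (fun x => by positivity)
            · exact HasSubset.Subset.eventuallyLE Set.Ioc_subset_Ioi_self
    · have hcm2 : c = (m:ℝ) := min_eq_right h.le
      rw [hcm2]
      rw [intervalIntegral.integral_same]
      apply setIntegral_nonneg measurableSet_Ioi
      intro x _
      positivity
  have hψval : ∫ x in Set.Ioi σ, ψ x = Real.exp (1/2) * (2 * Real.sqrt L + 1) / (2 * y ^ 2) := by
    rw [hψ]
    rw [integral_const_mul, tail_integral hy hσ]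
    have hsq : Real.sqrt σ = Real.sqrt L / y := by
      rw [show σ = (Real.sqrt L / y) ^ 2 by rw [div_pow, Real.sq_sqrt hL.le],
        Real.sqrt_sq (by positivity)]
    rw [hsq]
    have h2y : 2 * y * (Real.sqrt L / y) = 2 * Real.sqrt L := by
      field_simp
      try ring
    rw [h2y]
    have hee : Real.exp (1/2 + 2 * Real.sqrt L) * Real.exp (-(2 * Real.sqrt L))
        = Real.exp (1/2) := by
      rw [← Real.exp_add]; ring_nf
    calc Real.exp (1/2 + 2 * Real.sqrt L) * ((2 * Real.sqrt L + 1) * Real.exp (-(2 * Real.sqrt L))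
          / (2 * y ^ 2))
        = (Real.exp (1/2 + 2 * Real.sqrt L) * Real.exp (-(2 * Real.sqrt L)))
          * (2 * Real.sqrt L + 1) / (2 * y ^ 2) := by ring
      _ = Real.exp (1/2) * (2 * Real.sqrt L + 1) / (2 * y ^ 2) := by rw [hee]
  have hfinal : σ + Real.exp (1/2) * (2 * Real.sqrt L + 1) / (2 * y ^ 2)
      = (L + Real.exp (1 / 2) * (Real.sqrt L + 1 / 2)) / y ^ 2 := by
    rw [hσdef]; field_simp
  calc ∑ s ∈ Finset.Icc 1 m, g s ≤ ∫ x in (0:ℝ)..(0 + (m:ℕ)), g x := hsum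
    _ = (∫ x in (0:ℝ)..c, g x) + ∫ x in c..((m:ℕ):ℝ), g x := by
        rw [← hsplit]; norm_num
    _ ≤ σ + ∫ x in Set.Ioi σ, ψ x := add_le_add hb1 hb2
    _ = (L + Real.exp (1 / 2) * (Real.sqrt L + 1 / 2)) / y ^ 2 := by rw [hψval, hfinal]

lemma const_le {L : ℝ} (hL : Real.log 2 ≤ L) :
    L + Real.exp (1 / 2) * (Real.sqrt L + 1 / 2) ≤ 3 * L + 4 * Real.exp (-L) := by
  have hlog2 : (0.6931471803 : ℝ) < Real.log 2 := Real.log_two_gt_d9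
  have hL0 : (0:ℝ) < L := lt_of_lt_of_le (lt_trans (by norm_num) hlog2) hL
  have hsqL : Real.sqrt L ≤ (L + 1) / 2 := by
    nlinarith [sq_nonneg (Real.sqrt L - 1), Real.sq_sqrt hL0.le, Real.sqrt_nonneg L]
  have hepos := Real.exp_pos (1/2 : ℝ)
  have hee : Real.exp (1/2 : ℝ) * Real.exp (1/2 : ℝ) = Real.exp 1 := by
    rw [← Real.exp_add]; norm_num
  have he : Real.exp (1/2 : ℝ) ≤ 1.6488 := by
    nlinarith [Real.exp_one_lt_d9]
  have hh : Real.exp (1/2) * (Real.sqrt L + 1/2) ≤ 1.6488 * ((L + 1) / 2 + 1/2) := by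
    apply mul_le_mul he (by linarith) _ (by norm_num)
    have := Real.sqrt_nonneg L
    linarith
  rcases le_or_gt L (3/2) with hc | hc
  · have hm : Real.exp (-(3/2) : ℝ) ≤ Real.exp (-L) := Real.exp_le_exp.2 (by linarith)
    have h32 : Real.exp ((3/2) : ℝ) ≤ 4.4822 := by
      have hx : Real.exp (3/2 : ℝ) = Real.exp 1 * Real.exp (1/2) := by
        rw [← Real.exp_add]; norm_num
      rw [hx]
      nlinarith [Real.exp_one_lt_d9, Real.exp_pos (1:ℝ)]
    have hm2 : (0.2231 : ℝ) ≤ Real.exp (-(3/2) : ℝ) := by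
      rw [Real.exp_neg]
      have h1 : (4.4822:ℝ)⁻¹ ≤ (Real.exp (3/2 : ℝ))⁻¹ :=
        inv_anti₀ (Real.exp_pos _) h32
      have h2 : (0.2231:ℝ) ≤ (4.4822:ℝ)⁻¹ := by norm_num
      linarith
    nlinarith
  · nlinarith [Real.exp_pos (-L)]

end UCBAux


/-- **Integrated UCB deviation bound.** Let `(X k)` be i.i.d. `[0,1]`-valued with mean `μ₀`,
`X̄ s` the empirical mean of the first `s` samples, `T ≥ 2` real, `m ≥ 1`, `ζ > 0`.  Then
`∫_ζ^∞ ∑_{s=1}^m P(X̄ s + √(log T / s) - μ₀ > y) dy ≤ 3·log T/ζ + 4/(Tζ)`. -/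
theorem integrated_ucb_deviation
    {Ω : Type*} [MeasurableSpace Ω] (μ : Measure Ω) [IsProbabilityMeasure μ]
    (X : ℕ → Ω → ℝ) (μ₀ : ℝ)
    (hmeas : ∀ k, Measurable (X k))
    (hindep : iIndepFun X μ)
    (hident : ∀ k l, IdentDistrib (X k) (X l) μ μ)
    (hbound : ∀ k ω, X k ω ∈ Set.Icc (0 : ℝ) 1)
    (hmean : ∀ k, ∫ ω, X k ω ∂μ = μ₀)
    (T : ℝ) (hT : 2 ≤ T) (m : ℕ) (hm : 1 ≤ m) (ζ : ℝ) (hζ : 0 < ζ) :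
    ∫ y in Set.Ioi ζ,
        ∑ s ∈ Finset.Icc 1 m,
          (μ {ω | (∑ k ∈ Finset.range s, X k ω) / s +
            Real.sqrt (Real.log T / s) - μ₀ > y}).toReal
      ≤ 3 * Real.log T / ζ + 4 / (T * ζ) := by
  have hT0 : (0:ℝ) < T := lt_of_lt_of_le (by norm_num) hT
  set L : ℝ := Real.log T with hLdef
  have hL2 : Real.log 2 ≤ L := Real.log_le_log (by norm_num) hT
  have hL0 : 0 < L := lt_of_lt_of_le (Real.log_pos (by norm_num)) hL2
  set C : ℝ := L + Real.exp (1 / 2) * (Real.sqrt L + 1 / 2) with hCdef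
  have hC0 : 0 ≤ C := by
    rw [hCdef]
    have := Real.sqrt_nonneg L
    have := Real.exp_pos (1/2 : ℝ)
    nlinarith
  -- pointwise bound
  have hpt : ∀ y ∈ Set.Ioi ζ,
      (∑ s ∈ Finset.Icc 1 m,
        (μ {ω | (∑ k ∈ Finset.range s, X k ω) / s +
          Real.sqrt (Real.log T / s) - μ₀ > y}).toReal) ≤ C / y ^ 2 := by
    intro y hy
    have hy0 : 0 < y := lt_trans hζ hy
    refine le_trans (Finset.sum_le_sum ?_) (sum_g_le hL0 hy0 m)
    intro s hs
    have hs1 : 1 ≤ s := (Finset.mem_Icc.1 hs).1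
    have hs0 : (0:ℝ) < s := by exact_mod_cast Nat.pos_of_ne_zero (by omega)
    have hsq0 : 0 < Real.sqrt s := Real.sqrt_pos.2 hs0
    rcases le_or_gt (Real.sqrt s * y - Real.sqrt L) 0 with h | h
    · rw [max_eq_right h]
      norm_num
      calc (μ _).toReal ≤ (μ Set.univ).toReal :=
          ENNReal.toReal_mono (measure_ne_top μ _) (measure_mono (Set.subset_univ _))
        _ = 1 := by simp
    · rw [max_eq_left h.le]
      set t : ℝ := y - Real.sqrt (L / s) with htdef
      have hsqdiv : Real.sqrt (L / s) = Real.sqrt L / Real.sqrt s := Real.sqrt_div hL0.le s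
      have ht : 0 < t := by
        rw [htdef, hsqdiv, sub_pos, div_lt_iff₀ hsq0]
        linarith
      have hsub : {ω | (∑ k ∈ Finset.range s, X k ω) / s +
            Real.sqrt (Real.log T / s) - μ₀ > y}
          ⊆ {ω | (s : ℝ) * (μ₀ + t) ≤ ∑ k ∈ Finset.range s, X k ω} := by
        intro ω hω
        simp only [Set.mem_setOf_eq] at hω ⊢
        have h1 : μ₀ + t < (∑ k ∈ Finset.range s, X k ω) / s := by
          rw [htdef]
          have : Real.sqrt (Real.log T / s) = Real.sqrt (L / s) := by rw [hLdef]
          linarith [hω, this ▸ hω]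
        have := (lt_div_iff₀ hs0).1 h1
        linarith
      have hchain := chernoff_sum μ X μ₀ hmeas hindep hbound hmean s ht
      have hmono : (μ {ω | (∑ k ∈ Finset.range s, X k ω) / s +
            Real.sqrt (Real.log T / s) - μ₀ > y}).toReal
          ≤ (μ {ω | (s : ℝ) * (μ₀ + t) ≤ ∑ k ∈ Finset.range s, X k ω}).toReal :=
        ENNReal.toReal_mono (measure_ne_top μ _) (measure_mono hsub)
      refine hmono.trans (hchain.trans (le_of_eq ?_))
      congr 1
      have hst : Real.sqrt s * t = Real.sqrt s * y - Real.sqrt L := by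
        rw [htdef, hsqdiv]
        field_simp
        try ring
      have hss : Real.sqrt s * Real.sqrt s = (s:ℝ) := Real.mul_self_sqrt hs0.le
      nlinarith [hst, hss]
  -- integral of dominating function
  have hderiv : ∀ x ∈ Set.Ici ζ, HasDerivAt (fun y : ℝ => -(C * y⁻¹)) (C / x ^ 2) x := by
    intro x hx
    have hx0 : x ≠ 0 := (lt_of_lt_of_le hζ hx).ne'
    have h1 : HasDerivAt (fun y : ℝ => y⁻¹) (-(x ^ 2)⁻¹) x := hasDerivAt_inv hx0
    have h2 := (h1.const_mul C).neg
    refine h2.congr_deriv ?_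
    ring
  have htend : Filter.Tendsto (fun y : ℝ => -(C * y⁻¹)) Filter.atTop (nhds 0) := by
    have := (tendsto_inv_atTop_zero (𝕜 := ℝ)).const_mul C
    simpa using this.neg
  have hnonneg : ∀ x ∈ Set.Ioi ζ, 0 ≤ C / x ^ 2 := fun x hx => by positivity
  have hval : ∫ y in Set.Ioi ζ, C / y ^ 2 = C / ζ := by
    rw [integral_Ioi_of_hasDerivAt_of_nonneg' hderiv hnonneg htend]
    field_simp
    ring
  have hint : IntegrableOn (fun y : ℝ => C / y ^ 2) (Set.Ioi ζ) :=
    integrableOn_Ioi_deriv_of_nonneg' hderiv hnonneg htend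
  -- monotone integral
  have hmain : ∫ y in Set.Ioi ζ,
      (∑ s ∈ Finset.Icc 1 m,
        (μ {ω | (∑ k ∈ Finset.range s, X k ω) / s +
          Real.sqrt (Real.log T / s) - μ₀ > y}).toReal)
      ≤ ∫ y in Set.Ioi ζ, C / y ^ 2 := by
    apply integral_mono_of_nonneg
    · exact Filter.Eventually.of_forall fun y =>
        Finset.sum_nonneg fun s _ => ENNReal.toReal_nonneg
    · exact hint
    · exact (ae_restrict_iff' measurableSet_Ioi).2 (Filter.Eventually.of_forall hpt)
  have hCle : C ≤ 3 * L + 4 * T⁻¹ := by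
    have := const_le hL2
    rwa [show Real.exp (-L) = T⁻¹ by rw [Real.exp_neg, hLdef, Real.exp_log hT0]] at this
  calc ∫ y in Set.Ioi ζ,
      (∑ s ∈ Finset.Icc 1 m,
        (μ {ω | (∑ k ∈ Finset.range s, X k ω) / s +
          Real.sqrt (Real.log T / s) - μ₀ > y}).toReal)
      ≤ ∫ y in Set.Ioi ζ, C / y ^ 2 := hmain
    _ = C / ζ := hval
    _ ≤ (3 * L + 4 * T⁻¹) / ζ := by gcongr
    _ = 3 * Real.log T / ζ + 4 / (T * ζ) := by
        rw [hLdef]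
        field_simp
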